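/- arXiv:0709.4341 — 2 statements merged into one kernel-verified Lean document; each statement's English description precedes it below -/
import Mathlib

section
/- Let S be a group-bound inverse subsemigroup of IS(X) and let x, y ∈ S be such that y = axa⁻¹ for some a ∈ S with a⁻¹a ≥ e_x. Set â = a e_x. Then â⁻¹â = e_x, ââ⁻¹ = e_y, y e_y = â (x e_x) â⁻¹, and x e_x = â⁻¹ (y e_y) â; in particular x e_x ∼_p y e_y â â⁻¹ = y e_y, so x e_x ∼ y e_y. -/
namespace SgConjPaper

/-- `spow x n = x^(n+1)`: positive powers of an element of a semigroup. -/
def spow {S : Type*} [Semigroup S] (x : S) : ℕ → S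
  | 0 => x
  | n + 1 => spow x n * x

/-- `a` lies in the maximal subgroup of `S` whose identity is the idempotent
`e` (i.e. `e` is a two-sided identity for `a` and `a` is invertible over `e`). -/
def InMaxSubgroup {S : Type*} [Semigroup S] (e a : S) : Prop :=
  e * a = a ∧ a * e = a ∧ ∃ b : S, e * b = b ∧ b * e = b ∧ a * b = e ∧ b * a = e

/-- `e` is the idempotent `e_x`: the identity of the maximal subgroup
containing some positive power of `x`. -/
def IsEIdem {S : Type*} [Semigroup S] (x e : S) : Prop :=
  ∃ k : ℕ, InMaxSubgroup e (spow x k)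

/-- A semigroup is group-bound if some positive power of every element lies
in a subgroup. -/
def GroupBound (S : Type*) [Semigroup S] : Prop := ∀ x : S, ∃ e : S, IsEIdem x e

/-- Primary conjugacy: `x = uv`, `y = vu` for some `u, v ∈ S¹`. -/
def PrimConj {S : Type*} [Semigroup S] (x y : S) : Prop :=
  ∃ u v : WithOne S, (x : WithOne S) = u * v ∧ (y : WithOne S) = v * u

/-- Conjugacy `∼`: the transitive closure of primary conjugacy. -/
def SgConj {S : Type*} [Semigroup S] : S → S → Prop := Relation.TransGen PrimConj

/-- Conjugacy in the character sense `≡`: equal traces under every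
finite-dimensional complex representation. -/
def CharEq {S : Type*} [Semigroup S] (x y : S) : Prop :=
  ∀ (V : Type) (_ : AddCommGroup V) (_ : Module ℂ V) (_ : FiniteDimensional ℂ V)
    (φ : S →ₙ* Module.End ℂ V),
    LinearMap.trace ℂ V (φ x) = LinearMap.trace ℂ V (φ y)

/-- A semigroup is regular if for every `a` there is `b` with `a = aba`. -/
def Regular (S : Type*) [Semigroup S] : Prop := ∀ a : S, ∃ b : S, a * b * a = a

/-- The symmetric inverse semigroup `IS(X)`: partial bijections of `X`,
modelled as functions `X → Option X` that are injective where defined. -/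
def PBij (X : Type*) : Type _ :=
  {f : X → Option X // ∀ ⦃x y z : X⦄, f x = some z → f y = some z → x = y}

namespace PBij

variable {X : Type*}

instance : Mul (PBij X) :=
  ⟨fun f g =>
    ⟨fun x => (g.1 x).bind f.1, by
      intro x y z hx hy
      rcases Option.bind_eq_some_iff.mp hx with ⟨a, ha, ha'⟩
      rcases Option.bind_eq_some_iff.mp hy with ⟨b, hb, hb'⟩
      have : a = b := f.2 ha' hb'
      exact g.2 (this ▸ ha) hb⟩⟩

theorem mul_apply (f g : PBij X) (x : X) : (f * g).1 x = (g.1 x).bind f.1 := rfl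

instance : Semigroup (PBij X) where
  mul_assoc f g h := by
    apply Subtype.ext
    funext x
    show (h.1 x).bind (fun y => (g.1 y).bind f.1) = ((h.1 x).bind g.1).bind f.1
    exact (Option.bind_assoc _ _ _).symm

open Classical in
/-- The inverse of a partial bijection. -/
noncomputable def pinv (f : PBij X) : PBij X :=
  ⟨fun y => if h : ∃ x : X, f.1 x = some y then some h.choose else none, by
    intro x y z hx hy
    dsimp only at hx hy
    split_ifs at hx hy with h1 h2
    · have hx' := Option.some.inj hx
      have hy' := Option.some.inj hy
      have e1 : f.1 z = some x := hx' ▸ h1.choose_spec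
      have e2 : f.1 z = some y := hy' ▸ h2.choose_spec
      exact Option.some.inj (e1.symm.trans e2)⟩

/-- The domain of a partial bijection. -/
def pdom (f : PBij X) : Set X := {x | f.1 x ≠ none}

/-- The image of a set under a partial bijection. -/
def pimage (f : PBij X) (A : Set X) : Set X := {y | ∃ x ∈ A, f.1 x = some y}

/-- The stable image of `f`: the points lying on cycles of `f`. -/
def stim (f : PBij X) : Set X := {t | ∃ m : ℕ, (spow f m).1 t = some t}

/-- The cycle of `f` through `t` (the forward orbit of `t`; for `t ∈ stim f`
this is precisely the cycle containing `t`). -/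
def cycleOf (f : PBij X) (t : X) : Set X := {s | ∃ m : ℕ, (spow f m).1 t = some s}

/-- The set of cycles of a partial bijection. -/
def cycles (f : PBij X) : Set (Set X) := {C | ∃ t ∈ stim f, C = cycleOf f t}

-- my lemmas
theorem ext_opt {α : Type*} {o₁ o₂ : Option α}
    (h : ∀ z, o₁ = some z ↔ o₂ = some z) : o₂ = o₁ := by
  cases o₁ with
  | none =>
    cases o₂ with
    | none => rfl
    | some b => simpa using (h b).mpr rfl
  | some a => exact (h a).mp rfl

theorem pinv_spec (f : PBij X) {x y : X} :
    (pinv f).1 y = some x ↔ f.1 x = some y := by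
  classical
  have hrfl : (pinv f).1 y
      = if h : ∃ x : X, f.1 x = some y then some h.choose else none := rfl
  constructor
  · intro h
    rw [hrfl] at h
    split_ifs at h with h1
    · obtain rfl : h1.choose = x := Option.some.inj h
      exact h1.choose_spec
  · intro h
    have he : ∃ x' : X, f.1 x' = some y := ⟨x, h⟩
    rw [hrfl, dif_pos he]
    exact congrArg some (f.2 he.choose_spec h)

theorem mul_eq_some {f g : PBij X} {x z : X} :
    (f * g).1 x = some z ↔ ∃ m, g.1 x = some m ∧ f.1 m = some z := by
  rw [mul_apply]; exact Option.bind_eq_some_iff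

theorem reg (f : PBij X) : f * pinv f * f = f := by
  apply Subtype.ext
  funext x
  cases hfx : f.1 x with
  | none => rw [mul_apply, hfx]; rfl
  | some y =>
    apply ext_opt
    intro z
    rw [mul_eq_some]
    constructor
    · intro h
      obtain rfl : y = z := Option.some.inj h
      exact ⟨y, hfx, mul_eq_some.mpr ⟨x, (pinv_spec f).mpr hfx, hfx⟩⟩
    · rintro ⟨m, hm, hm2⟩
      obtain rfl : y = m := Option.some.inj (hfx.symm.trans hm)
      rcases mul_eq_some.mp hm2 with ⟨w, hw1, hw2⟩
      have h1 : f.1 w = some y := (pinv_spec f).mp hw1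
      have h2 : w = x := f.2 h1 hfx
      subst h2
      exact hfx.symm.trans hw2

theorem idem_fix {f : PBij X} (hf : f * f = f) {x y : X}
    (h : f.1 x = some y) : y = x := by
  have h2 : (f * f).1 x = some y := by rw [hf]; exact h
  rcases mul_eq_some.mp h2 with ⟨m, hm, hm2⟩
  obtain rfl : y = m := Option.some.inj (h.symm.trans hm)
  exact (f.2 h hm2).symm

theorem pinv_mul (f g : PBij X) : pinv (f * g) = pinv g * pinv f := by
  apply Subtype.ext
  funext u
  apply ext_opt
  intro z
  rw [mul_eq_some]
  constructor
  · rintro ⟨m, hm, hm2⟩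
    exact (pinv_spec _).mpr (mul_eq_some.mpr ⟨m, (pinv_spec g).mp hm2, (pinv_spec f).mp hm⟩)
  · intro h
    rcases mul_eq_some.mp ((pinv_spec _).mp h) with ⟨m, hm, hm2⟩
    exact ⟨m, (pinv_spec f).mpr hm2, (pinv_spec g).mpr hm⟩

theorem idem_mul_some {f g : PBij X} (hf : f * f = f) (hg : g * g = g) {x z : X} :
    (f * g).1 x = some z ↔ g.1 x = some x ∧ f.1 x = some x ∧ z = x := by
  rw [mul_eq_some]
  constructor
  · rintro ⟨m, hm, hm2⟩
    obtain rfl : m = x := idem_fix hg hm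
    obtain rfl : z = m := idem_fix hf hm2
    exact ⟨hm, hm2, rfl⟩
  · rintro ⟨h1, h2, rfl⟩
    exact ⟨_, h1, h2⟩

theorem idem_comm {f g : PBij X} (hf : f * f = f) (hg : g * g = g) :
    f * g = g * f := by
  apply Subtype.ext
  funext x
  apply ext_opt
  intro z
  rw [idem_mul_some hf hg, idem_mul_some hg hf]
  tauto

theorem pinv_idem {f : PBij X} (hf : f * f = f) : pinv f = f := by
  apply Subtype.ext
  funext u
  apply ext_opt
  intro z
  rw [pinv_spec]
  constructor
  · intro h
    obtain rfl := idem_fix hf h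
    exact h
  · intro h
    obtain rfl := idem_fix hf h
    exact h

theorem pinv_pinv (f : PBij X) : pinv (pinv f) = f := by
  apply Subtype.ext
  funext u
  apply ext_opt
  intro z
  rw [pinv_spec, pinv_spec]

end PBij

/-- An inverse subsemigroup of `IS(X)`: a subsemigroup closed under inverses. -/
structure InvSubsemigroup (X : Type*) where
  carrier : Set (PBij X)
  mul_mem : ∀ ⦃a b : PBij X⦄, a ∈ carrier → b ∈ carrier → a * b ∈ carrier
  inv_mem : ∀ ⦃a : PBij X⦄, a ∈ carrier → PBij.pinv a ∈ carrier

instance {X : Type*} (T : InvSubsemigroup X) : Semigroup T.carrier where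
  mul a b := ⟨a.1 * b.1, T.mul_mem a.2 b.2⟩
  mul_assoc a b c := Subtype.ext (mul_assoc a.1 b.1 c.1)

/-- The inverse operation on an inverse subsemigroup of `IS(X)`. -/
noncomputable def sinv {X : Type*} (T : InvSubsemigroup X) (a : T.carrier) : T.carrier :=
  ⟨PBij.pinv a.1, T.inv_mem a.2⟩

/-- `u` lies in a (not necessarily maximal) subgroup over identity `e`. -/
def GrpOf {M : Type*} [Monoid M] (e u : M) : Prop :=
  e * u = u ∧ u * e = u ∧ ∃ b : M, e * b = b ∧ b * e = b ∧ u * b = e ∧ b * u = e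

/-- Axioms making `J` the inverse map of an inverse-semigroup-with-1. -/
structure InvAx {M : Type*} [Monoid M] (J : M → M) : Prop where
  jmul : ∀ u v, J (u * v) = J v * J u
  jj : ∀ u, J (J u) = u
  jone : J 1 = 1
  regu : ∀ u, u * J u * u = u
  comm : ∀ p q : M, p * p = p → q * q = q → p * q = q * p
  jidem : ∀ p : M, p * p = p → J p = p

section Abstract

variable {M : Type*} [Monoid M] {J : M → M}

theorem mw {a c : M} (h : a = c) (w : M) : a * w = c * w := by rw [h]

theorem InvAx.regu' (h : InvAx J) (u : M) : J u * u * J u = J u := by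
  have := h.regu (J u); rwa [h.jj] at this

theorem InvAx.jpow (h : InvAx J) (u : M) : ∀ n, J (u ^ n) = (J u) ^ n
  | 0 => by rw [pow_zero, pow_zero, h.jone]
  | n + 1 => by rw [pow_succ, h.jmul, h.jpow u n, ← pow_succ']

theorem grp_idem {e u : M} (hg : GrpOf e u) : e * e = e := by
  obtain ⟨h1, _, b, _, _, hub, _⟩ := hg
  calc e * e = e * (u * b) := by rw [hub]
    _ = e * u * b := (mul_assoc _ _ _).symm
    _ = u * b := by rw [h1]
    _ = e := hub

theorem grp_succ {e u : M} {n : ℕ} (hg : GrpOf e (u ^ (n + 1))) :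
    GrpOf e (u ^ (n + 2)) := by
  obtain ⟨h1, h2, b, hb1, hb2, hub, hbu⟩ := hg
  have hee : e * e = e := grp_idem ⟨h1, h2, b, hb1, hb2, hub, hbu⟩
  have hpow : u ^ (n + 2) = u ^ (n + 1) * u := pow_succ u (n + 1)
  have hpow' : u ^ (n + 2) = u * u ^ (n + 1) := pow_succ' u (n + 1)
  have hE1 : e * u ^ (n + 2) = u ^ (n + 2) := by
    rw [hpow, ← mul_assoc, h1]
  have h1E : u ^ (n + 2) * e = u ^ (n + 2) := by
    rw [hpow', mul_assoc, h2]
  have hsplit : u ^ (n + 2) * u ^ n = u ^ (n + 1) * u ^ (n + 1) := by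
    rw [← pow_add, ← pow_add]; congr 1; omega
  have hsplit' : u ^ n * u ^ (n + 2) = u ^ (n + 1) * u ^ (n + 1) := by
    rw [← pow_add, ← pow_add]; congr 1; omega
  -- left inverse
  have hc : (b * (b * u ^ n)) * u ^ (n + 2) = e := by
    calc (b * (b * u ^ n)) * u ^ (n + 2) = b * (b * (u ^ n * u ^ (n + 2))) := by
          simp only [mul_assoc]
      _ = b * (b * (u ^ (n + 1) * u ^ (n + 1))) := by rw [hsplit']
      _ = b * ((b * u ^ (n + 1)) * u ^ (n + 1)) := by simp only [mul_assoc]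
      _ = b * (e * u ^ (n + 1)) := by rw [hbu]
      _ = b * u ^ (n + 1) := by rw [h1]
      _ = e := hbu
  -- right inverse
  have hd : u ^ (n + 2) * (u ^ n * (b * b)) = e := by
    calc u ^ (n + 2) * (u ^ n * (b * b)) = (u ^ (n + 2) * u ^ n) * (b * b) := by
          simp only [mul_assoc]
      _ = (u ^ (n + 1) * u ^ (n + 1)) * (b * b) := by rw [hsplit]
      _ = u ^ (n + 1) * ((u ^ (n + 1) * b) * b) := by simp only [mul_assoc]
      _ = u ^ (n + 1) * (e * b) := by rw [hub]
      _ = u ^ (n + 1) * b := by rw [hb1]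
      _ = e := hub
  set c := b * (b * u ^ n) with hcdef
  set d := u ^ n * (b * b) with hddef
  set c' := e * (c * e) with hc'def
  set d' := e * (d * e) with hd'def
  have hc' : c' * u ^ (n + 2) = e := by
    calc c' * u ^ (n + 2) = e * (c * (e * u ^ (n + 2))) := by
          rw [hc'def]; simp only [mul_assoc]
      _ = e * (c * u ^ (n + 2)) := by rw [hE1]
      _ = e * e := by rw [hc]
      _ = e := hee
  have hd' : u ^ (n + 2) * d' = e := by
    calc u ^ (n + 2) * d' = ((u ^ (n + 2) * e) * d) * e := by
          rw [hd'def]; simp only [mul_assoc]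
      _ = (u ^ (n + 2) * d) * e := by rw [h1E]
      _ = e * e := by rw [hd]
      _ = e := hee
  have hc'e : c' * e = c' := by
    rw [hc'def]; simp only [mul_assoc]; rw [hee]
  have hec' : e * c' = c' := by
    rw [hc'def, ← mul_assoc, hee]
  have hed' : e * d' = d' := by
    rw [hd'def, ← mul_assoc, hee]
  have hcd : c' = d' := by
    calc c' = c' * e := hc'e.symm
      _ = c' * (u ^ (n + 2) * d') := by rw [hd']
      _ = (c' * u ^ (n + 2)) * d' := (mul_assoc _ _ _).symm
      _ = e * d' := by rw [hc']
      _ = d' := hed'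
  exact ⟨hE1, h1E, c', hec', hc'e, by rw [hcd]; exact hd', hc'⟩

theorem grp_add {e u : M} {n : ℕ} (hg : GrpOf e (u ^ (n + 1))) :
    ∀ k, GrpOf e (u ^ (n + 1 + k))
  | 0 => hg
  | k + 1 => by
    have := grp_succ (n := n + k) (by rw [show n + k + 1 = n + 1 + k from by omega]; exact grp_add hg k)
    rwa [show n + k + 2 = n + 1 + (k + 1) from by omega] at this

theorem comm_e {e u : M} {m : ℕ} (hm : GrpOf e (u ^ (m + 1)))
    (hm1 : GrpOf e (u ^ (m + 2))) : e * u = u * e := by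
  obtain ⟨h1, h2, b, hb1, hb2, hub, hbu⟩ := hm
  obtain ⟨g1, g2, _⟩ := hm1
  have hpow : u ^ (m + 2) = u ^ (m + 1) * u := pow_succ u (m + 1)
  have hpow' : u ^ (m + 2) = u * u ^ (m + 1) := pow_succ' u (m + 1)
  have hflip : u ^ (m + 1) * u ^ (m + 2) = u ^ (m + 2) * u ^ (m + 1) := by
    rw [← pow_add, ← pow_add]; congr 1; omega
  have key : u ^ (m + 2) * b = b * u ^ (m + 2) := by
    calc u ^ (m + 2) * b = (e * u ^ (m + 2)) * b := by rw [g1]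
      _ = ((b * u ^ (m + 1)) * u ^ (m + 2)) * b := by rw [hbu]
      _ = b * ((u ^ (m + 1) * u ^ (m + 2)) * b) := by simp only [mul_assoc]
      _ = b * ((u ^ (m + 2) * u ^ (m + 1)) * b) := by rw [hflip]
      _ = b * (u ^ (m + 2) * (u ^ (m + 1) * b)) := by simp only [mul_assoc]
      _ = b * (u ^ (m + 2) * e) := by rw [hub]
      _ = b * u ^ (m + 2) := by rw [g2]
  calc e * u = (b * u ^ (m + 1)) * u := by rw [hbu]
    _ = b * u ^ (m + 2) := by rw [mul_assoc, ← hpow]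
    _ = u ^ (m + 2) * b := key.symm
    _ = u * (u ^ (m + 1) * b) := by rw [hpow', mul_assoc]
    _ = u * e := by rw [hub]

end Abstract

section Abstract2

variable {M : Type*} [Monoid M] {J : M → M}

theorem inv_unique (h : InvAx J) {u b : M} (hu : u * b * u = u)
    (hb : b * u * b = b) : b = J u := by
  set c := J u with hc
  have huc : u * c * u = u := h.regu u
  have hcu : c * u * c = c := h.regu' u
  have hbu_idem : (b * u) * (b * u) = b * u := by
    calc (b * u) * (b * u) = (b * (u * b)) * u := by simp only [mul_assoc]
      _ = (b * u * b) * u := by simp only [mul_assoc]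
      _ = b * u := by rw [hb]
  have hcu_idem : (c * u) * (c * u) = c * u := by
    calc (c * u) * (c * u) = (c * u * c) * u := by simp only [mul_assoc]
      _ = c * u := by rw [hcu]
  have hub_idem : (u * b) * (u * b) = u * b := by
    calc (u * b) * (u * b) = (u * b * u) * b := by simp only [mul_assoc]
      _ = u * b := by rw [hu]
  have huc_idem : (u * c) * (u * c) = u * c := by
    calc (u * c) * (u * c) = (u * c * u) * c := by simp only [mul_assoc]
      _ = u * c := by rw [huc]
  have hbu_cu : b * u = c * u := by
    calc b * u = b * (u * c * u) := by rw [huc]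
      _ = (b * u) * (c * u) := by simp only [mul_assoc]
      _ = (c * u) * (b * u) := h.comm _ _ hbu_idem hcu_idem
      _ = c * (u * b * u) := by simp only [mul_assoc]
      _ = c * u := by rw [hu]
  have hub_uc : u * b = u * c := by
    calc u * b = (u * c * u) * b := by rw [huc]
      _ = (u * c) * (u * b) := by simp only [mul_assoc]
      _ = (u * b) * (u * c) := h.comm _ _ huc_idem hub_idem
      _ = (u * b * u) * c := by simp only [mul_assoc]
      _ = u * c := by rw [hu]
  calc b = b * u * b := hb.symm
    _ = b * (u * c) := by rw [mul_assoc, hub_uc]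
    _ = (b * u) * c := (mul_assoc _ _ _).symm
    _ = (c * u) * c := by rw [hbu_cu]
    _ = c := hcu
  
theorem grp_jinv (h : InvAx J) {e u : M} (hg : GrpOf e u) :
    u * J u = e ∧ J u * u = e := by
  obtain ⟨h1, h2, b, hb1, hb2, hub, hbu⟩ := hg
  have hbJ : b = J u := by
    apply inv_unique h
    · rw [hub, h1]
    · rw [hbu, hb1]
  rw [← hbJ]; exact ⟨hub, hbu⟩

/-- `dom (u*v) = J v * dom u * v`. -/
theorem dom_mul_eq (h : InvAx J) (u v : M) :
    J (u * v) * (u * v) = J v * (J u * u) * v := by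
  rw [h.jmul]; simp only [mul_assoc]

/-- `leq (dom (u*v)) (dom v)`. -/
theorem dom_mul_leq (h : InvAx J) (u v : M) :
    (J (u * v) * (u * v)) * (J v * v) = J (u * v) * (u * v) := by
  have hv : v * (J v * v) = v := by rw [← mul_assoc, h.regu]
  rw [h.jmul]
  simp only [mul_assoc]
  rw [hv]

/-- `leq (ran (u*v)) (ran u)`. -/
theorem ran_mul_leq (h : InvAx J) (u v : M) :
    ((u * v) * J (u * v)) * (u * J u) = (u * v) * J (u * v) := by
  have hvv : (v * J v) * (v * J v) = v * J v := by
    calc (v * J v) * (v * J v) = (v * J v * v) * J v := by simp only [mul_assoc]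
      _ = v * J v := by rw [h.regu]
  have huu : (J u * u) * (J u * u) = J u * u := by
    calc (J u * u) * (J u * u) = (J u * u * J u) * u := by simp only [mul_assoc]
      _ = J u * u := by rw [h.regu' u]
  have hcomm : (v * J v) * (J u * u) = (J u * u) * (v * J v) := h.comm _ _ hvv huu
  calc ((u * v) * J (u * v)) * (u * J u)
      = u * (((v * J v) * (J u * u)) * J u) := by rw [h.jmul]; simp only [mul_assoc]
    _ = u * (((J u * u) * (v * J v)) * J u) := by rw [hcomm]
    _ = (u * J u * u) * ((v * J v) * J u) := by simp only [mul_assoc]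
    _ = u * ((v * J v) * J u) := by rw [h.regu]
    _ = (u * v) * J (u * v) := by rw [h.jmul]; simp only [mul_assoc]

theorem leq_trans {p q r : M} (hpq : p * q = p) (hqr : q * r = q) : p * r = p := by
  calc p * r = (p * q) * r := by rw [hpq]
    _ = p * (q * r) := mul_assoc _ _ _
    _ = p * q := by rw [hqr]
    _ = p := hpq

theorem pq_leq (h : InvAx J) {p q : M} (hp : p * p = p) (hq : q * q = q) :
    (p * q) * p = p * q := by
  calc (p * q) * p = p * (q * p) := mul_assoc _ _ _
    _ = p * (p * q) := by rw [h.comm _ _ hq hp]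
    _ = (p * p) * q := (mul_assoc _ _ _).symm
    _ = p * q := by rw [hp]

theorem dom_idem (h : InvAx J) (u : M) : (J u * u) * (J u * u) = J u * u := by
  calc (J u * u) * (J u * u) = (J u * u * J u) * u := by simp only [mul_assoc]
    _ = J u * u := by rw [h.regu' u]

theorem conj_mono (h : InvAx J) {p q : M} (v : M) (hp : p * p = p) (hq : q * q = q)
    (hpq : p * q = p) : (J v * p * v) * (J v * q * v) = J v * p * v := by
  have hvv : (v * J v) * (v * J v) = v * J v := by
    calc (v * J v) * (v * J v) = (v * J v * v) * J v := by simp only [mul_assoc]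
      _ = v * J v := by rw [h.regu]
  have hc : p * (v * J v) = (v * J v) * p := h.comm _ _ hp hvv
  have hJvJ : J v * (v * J v) = J v := by rw [← mul_assoc, h.regu' v]
  calc (J v * p * v) * (J v * q * v)
      = J v * ((p * (v * J v)) * (q * v)) := by simp only [mul_assoc]
    _ = J v * (((v * J v) * p) * (q * v)) := by rw [hc]
    _ = (J v * (v * J v)) * ((p * q) * v) := by simp only [mul_assoc]
    _ = J v * ((p * q) * v) := by rw [hJvJ]
    _ = J v * (p * v) := by rw [hpq]
    _ = J v * p * v := (mul_assoc _ _ _).symm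

end Abstract2

theorem main_calc {M : Type*} [Monoid M] {J : M → M} (h : InvAx J)
    {A Xv Yv E EY : M}
    (hex : ∃ n : ℕ, GrpOf E (Xv ^ (n + 1)))
    (hey : ∃ n : ℕ, GrpOf EY (Yv ^ (n + 1)))
    (hord : ∃ F : M, F * F = F ∧ E = J A * A * F)
    (hy : Yv = A * Xv * J A) :
    J (A * E) * (A * E) = E ∧
    (A * E) * J (A * E) = EY ∧
    Yv * EY = (A * E) * (Xv * E) * J (A * E) ∧
    Xv * E = J (A * E) * (Yv * EY) * (A * E) ∧
    EY * EY = EY := by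
  obtain ⟨F, hFF, hEdef⟩ := hord
  obtain ⟨nx, hgx⟩ := hex
  obtain ⟨ny, hgy⟩ := hey
  set G := J A * A with hGdef
  have hEGF : E = G * F := hEdef
  have hAJA : A * (J A * A) = A := by rw [← mul_assoc, h.regu]
  have hGG : G * G = G := by rw [hGdef, mul_assoc, hAJA]
  have hEE : E * E = E := grp_idem hgx
  have hEYEY : EY * EY = EY := grp_idem hgy
  have hGE : G * E = E := by rw [hEGF, ← mul_assoc, hGG]
  have hEG : E * G = E := by rw [h.comm E G hEE hGG]; exact hGE
  have hJE : J E = E := h.jidem E hEE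
  have hJG : J G = G := h.jidem G hGG
  set bigM := nx + ny + 1 with hbigM
  have hGXN : GrpOf E (Xv ^ (bigM + 1)) := by
    have := grp_add hgx (ny + 1)
    rwa [show nx + 1 + (ny + 1) = bigM + 1 from by omega] at this
  have hGXN1 : GrpOf E (Xv ^ (bigM + 2)) := by
    have := grp_add hgx (ny + 2)
    rwa [show nx + 1 + (ny + 2) = bigM + 2 from by omega] at this
  have hGYN : GrpOf EY (Yv ^ (bigM + 1)) := by
    have := grp_add hgy (nx + 1)
    rwa [show ny + 1 + (nx + 1) = bigM + 1 from by omega] at this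
  have hEX : E * Xv = Xv * E := comm_e hGXN hGXN1
  have hXJX : Xv ^ (bigM + 1) * (J Xv) ^ (bigM + 1) = E := by
    have := (grp_jinv h hGXN).1; rwa [h.jpow] at this
  have hJXX : (J Xv) ^ (bigM + 1) * Xv ^ (bigM + 1) = E := by
    have := (grp_jinv h hGXN).2; rwa [h.jpow] at this
  have hYJY : Yv ^ (bigM + 1) * (J Yv) ^ (bigM + 1) = EY := by
    have := (grp_jinv h hGYN).1; rwa [h.jpow] at this
  have hJYY : (J Yv) ^ (bigM + 1) * Yv ^ (bigM + 1) = EY := by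
    have := (grp_jinv h hGYN).2; rwa [h.jpow] at this
  have hEJX : E * J Xv = J Xv * E := by
    have h2 := congrArg J hEX
    rw [h.jmul, h.jmul, hJE] at h2
    exact h2.symm
  have cEX : Commute E Xv := hEX
  have cEJX : Commute E (J Xv) := hEJX
  -- context lemmas
  have hGfold : ∀ w : M, J A * (A * w) = G * w := fun w => by
    rw [hGdef, mul_assoc]
  have hGEw : ∀ w : M, G * (E * w) = E * w := fun w => by rw [← mul_assoc, hGE]
  have hEEw : ∀ w : M, E * (E * w) = E * w := fun w => by rw [← mul_assoc, hEE]
  have hEXw : ∀ w : M, E * (Xv * w) = Xv * (E * w) := fun w => by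
    rw [← mul_assoc, ← mul_assoc, hEX]
  have hEJXNw : ∀ w : M, E * ((J Xv) ^ (bigM + 1) * w) = (J Xv) ^ (bigM + 1) * (E * w) :=
    fun w => by rw [← mul_assoc, ← mul_assoc, (cEJX.pow_right (bigM + 1)).eq]
  have hXJXw : ∀ w : M, Xv ^ (bigM + 1) * ((J Xv) ^ (bigM + 1) * w) = E * w :=
    fun w => by rw [← mul_assoc, hXJX]
  -- powers of X*G
  have hQ : ∀ m, (Xv * G) ^ m * E = Xv ^ m * E := by
    intro m
    induction m with
    | zero => simp
    | succ m ih =>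
      calc (Xv * G) ^ (m + 1) * E = (Xv * G) ^ m * (Xv * (G * E)) := by
            rw [pow_succ]; simp only [mul_assoc]
        _ = (Xv * G) ^ m * (Xv * E) := by rw [hGE]
        _ = (Xv * G) ^ m * (E * Xv) := by rw [hEX]
        _ = ((Xv * G) ^ m * E) * Xv := by rw [← mul_assoc]
        _ = (Xv ^ m * E) * Xv := by rw [ih]
        _ = Xv ^ m * (Xv * E) := by rw [mul_assoc, hEX]
        _ = Xv ^ (m + 1) * E := by rw [← mul_assoc, ← pow_succ]
  have hYform : ∀ m, Yv ^ (m + 1) = A * ((Xv * G) ^ m * Xv) * J A := by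
    intro m
    induction m with
    | zero => rw [pow_one, hy, pow_zero, one_mul]
    | succ m ih =>
      calc Yv ^ (m + 2) = Yv ^ (m + 1) * Yv := pow_succ Yv (m + 1)
        _ = (A * ((Xv * G) ^ m * Xv) * J A) * (A * Xv * J A) := by rw [ih, hy]
        _ = A * ((Xv * G) ^ (m + 1) * Xv) * J A := by
            rw [pow_succ (Xv * G) m]
            simp only [mul_assoc]
            rw [hGfold]
  have hAXE : Yv ^ (bigM + 1) * (A * E) = A * (Xv ^ (bigM + 1) * E) := by
    have hQw : ∀ w : M, (Xv * G) ^ bigM * (E * w) = Xv ^ bigM * (E * w) := fun w =>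
      calc (Xv * G) ^ bigM * (E * w) = ((Xv * G) ^ bigM * E) * w := (mul_assoc _ _ _).symm
        _ = (Xv ^ bigM * E) * w := by rw [hQ bigM]
        _ = Xv ^ bigM * (E * w) := mul_assoc _ _ _
    rw [hYform bigM, pow_succ Xv bigM]
    simp only [mul_assoc]
    rw [hGfold, hGE, ← hEX, hQw]
  -- e' := A * E * J A
  have hJAE : J (A * E) = E * J A := by rw [h.jmul, hJE]
  have hT : (Yv ^ (bigM + 1) * (A * E)) * J (Yv ^ (bigM + 1) * (A * E)) = A * E * J A := by
    rw [hAXE, h.jmul, h.jmul, hJE, h.jpow]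
    simp only [mul_assoc]
    rw [hEEw, hEJXNw, hXJXw, hEEw]
  have hYNJ : Yv ^ (bigM + 1) * J (Yv ^ (bigM + 1)) = EY := by rw [h.jpow]; exact hYJY
  have d1 : (A * E * J A) * EY = A * E * J A := by
    have Hran := ran_mul_leq h (Yv ^ (bigM + 1)) (A * E)
    rw [hT, hYNJ] at Hran
    exact Hran
  -- domXG
  have domXG : ∀ m, (J ((Xv * G) ^ m) * (Xv * G) ^ m) * (J (Xv ^ m) * Xv ^ m)
      = J ((Xv * G) ^ m) * (Xv * G) ^ m := by
    intro m
    induction m with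
    | zero => simp [h.jone]
    | succ m ih =>
      have hDD := dom_idem h ((Xv * G) ^ m)
      have hQQ := dom_idem h (Xv ^ m)
      have hDidem := dom_idem h (Xv ^ (m + 1))
      have hP : J ((Xv * G) ^ (m + 1)) * (Xv * G) ^ (m + 1)
          = J (Xv * G) * (J ((Xv * G) ^ m) * (Xv * G) ^ m) * (Xv * G) := by
        rw [pow_succ]; exact dom_mul_eq h _ _
      have hDX : J (Xv ^ (m + 1)) * Xv ^ (m + 1)
          = J Xv * (J (Xv ^ m) * Xv ^ m) * Xv := by
        rw [pow_succ]; exact dom_mul_eq h _ _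
      have hcGD : G * (J (Xv ^ (m + 1)) * Xv ^ (m + 1))
          = (J (Xv ^ (m + 1)) * Xv ^ (m + 1)) * G := h.comm _ _ hGG hDidem
      have hmid : J (Xv * G) * (J (Xv ^ m) * Xv ^ m) * (Xv * G)
          = (J (Xv ^ (m + 1)) * Xv ^ (m + 1)) * G := by
        calc J (Xv * G) * (J (Xv ^ m) * Xv ^ m) * (Xv * G)
            = G * ((J Xv * (J (Xv ^ m) * Xv ^ m) * Xv) * G) := by
              rw [h.jmul, hJG]; simp only [mul_assoc]
          _ = G * ((J (Xv ^ (m + 1)) * Xv ^ (m + 1)) * G) := by rw [hDX]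
          _ = (G * (J (Xv ^ (m + 1)) * Xv ^ (m + 1))) * G := (mul_assoc _ _ _).symm
          _ = ((J (Xv ^ (m + 1)) * Xv ^ (m + 1)) * G) * G := by rw [hcGD]
          _ = (J (Xv ^ (m + 1)) * Xv ^ (m + 1)) * (G * G) := mul_assoc _ _ _
          _ = (J (Xv ^ (m + 1)) * Xv ^ (m + 1)) * G := by rw [hGG]
      have step1 := conj_mono h (Xv * G) hDD hQQ ih
      rw [← hP, hmid] at step1
      have step3 : ((J (Xv ^ (m + 1)) * Xv ^ (m + 1)) * G) * (J (Xv ^ (m + 1)) * Xv ^ (m + 1))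
          = (J (Xv ^ (m + 1)) * Xv ^ (m + 1)) * G := pq_leq h hDidem hGG
      exact leq_trans step1 step3
  -- d2
  have hEYdom : EY = J (Yv ^ (bigM + 1)) * Yv ^ (bigM + 1) := by
    rw [h.jpow]; exact hJYY.symm
  have hYW : Yv ^ (bigM + 1) = (A * ((Xv * G) ^ bigM * Xv)) * J A := hYform bigM
  have hdomY : J (Yv ^ (bigM + 1)) * Yv ^ (bigM + 1)
      = A * (J (A * ((Xv * G) ^ bigM * Xv)) * (A * ((Xv * G) ^ bigM * Xv))) * J A := by
    rw [hYW]
    have hde := dom_mul_eq h (A * ((Xv * G) ^ bigM * Xv)) (J A)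
    rw [hde, h.jj]
  have s1 := dom_mul_leq h A ((Xv * G) ^ bigM * Xv)
  have hdomW : J ((Xv * G) ^ bigM * Xv) * ((Xv * G) ^ bigM * Xv)
      = J Xv * (J ((Xv * G) ^ bigM) * (Xv * G) ^ bigM) * Xv := dom_mul_eq h _ _
  have hXq : J Xv * (J (Xv ^ bigM) * Xv ^ bigM) * Xv = E := by
    have := dom_mul_eq h (Xv ^ bigM) Xv
    rw [← pow_succ] at this
    rw [← this, h.jpow]
    exact hJXX
  have s2 : (J ((Xv * G) ^ bigM * Xv) * ((Xv * G) ^ bigM * Xv)) * E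
      = J ((Xv * G) ^ bigM * Xv) * ((Xv * G) ^ bigM * Xv) := by
    have hconj := conj_mono h Xv (dom_idem h ((Xv * G) ^ bigM)) (dom_idem h (Xv ^ bigM))
      (domXG bigM)
    rw [hXq, ← hdomW] at hconj
    exact hconj
  have s3 := leq_trans s1 s2
  have s4 := conj_mono h (J A) (dom_idem h (A * ((Xv * G) ^ bigM * Xv))) hEE s3
  rw [h.jj] at s4
  have d2 : EY * (A * E * J A) = EY := by
    rw [hEYdom, hdomY]
    exact s4
  have hE'idem : (A * E * J A) * (A * E * J A) = A * E * J A := by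
    simp only [mul_assoc]
    rw [hGfold, hGEw, hEEw]
  have hce : (A * E * J A) * EY = EY * (A * E * J A) := h.comm _ _ hE'idem hEYEY
  have hE'EY : A * E * J A = EY := by
    calc A * E * J A = (A * E * J A) * EY := d1.symm
      _ = EY * (A * E * J A) := hce
      _ = EY := d2
  -- final goals
  have g1 : J (A * E) * (A * E) = E := by
    rw [hJAE]
    simp only [mul_assoc]
    rw [hGfold, hGE, hEE]
  have g2 : (A * E) * J (A * E) = EY := by
    rw [hJAE, ← hE'EY]
    simp only [mul_assoc]
    rw [hEEw]
  have g3 : Yv * EY = (A * E) * (Xv * E) * J (A * E) := by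
    rw [hJAE, ← hE'EY, hy]
    simp only [mul_assoc]
    rw [hGfold, hGEw, hEEw, hEXw, hEEw]
  have g4 : Xv * E = J (A * E) * (Yv * EY) * (A * E) := by
    rw [hJAE, hy, ← hE'EY]
    simp only [mul_assoc]
    rw [hGfold, hGfold, hGfold, hGE, hEE, hGE, ← hEX, hGEw, hEEw]
  exact ⟨g1, g2, g3, g4, hEYEY⟩

section Bridge

variable {X : Type*} (T : InvSubsemigroup X)

theorem sreg (s : T.carrier) : s * sinv T s * s = s :=
  Subtype.ext (PBij.reg s.1)

theorem smul_inv (s t : T.carrier) : sinv T (s * t) = sinv T t * sinv T s :=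
  Subtype.ext (PBij.pinv_mul s.1 t.1)

theorem sjj (s : T.carrier) : sinv T (sinv T s) = s :=
  Subtype.ext (PBij.pinv_pinv s.1)

theorem scomm {s t : T.carrier} (hs : s * s = s) (ht : t * t = t) : s * t = t * s :=
  Subtype.ext (PBij.idem_comm (congrArg Subtype.val hs) (congrArg Subtype.val ht))

theorem sidem {s : T.carrier} (hs : s * s = s) : sinv T s = s :=
  Subtype.ext (PBij.pinv_idem (congrArg Subtype.val hs))

open Classical in
/-- The inverse map extended to `WithOne T.carrier`. -/
noncomputable def winv : WithOne T.carrier → WithOne T.carrier := fun u =>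
  if h : u = 1 then 1 else ↑(sinv T (WithOne.unone h))

theorem winv_one : winv T 1 = 1 := by
  unfold winv
  rw [dif_pos rfl]

theorem winv_coe (s : T.carrier) : winv T ↑s = ↑(sinv T s) := by
  unfold winv
  rw [dif_neg WithOne.coe_ne_one, WithOne.unone_coe]

theorem wcases (u : WithOne T.carrier) : u = 1 ∨ ∃ s : T.carrier, u = ↑s := by
  by_cases h : u = 1
  · exact Or.inl h
  · obtain ⟨s, hs⟩ := WithOne.ne_one_iff_exists.mp h
    exact Or.inr ⟨s, hs.symm⟩

theorem winv_ax : InvAx (winv T) where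
  jmul u v := by
    rcases wcases T u with rfl | ⟨s, rfl⟩
    · rw [one_mul, winv_one, mul_one]
    · rcases wcases T v with rfl | ⟨t, rfl⟩
      · rw [mul_one, winv_one, one_mul]
      · rw [← WithOne.coe_mul, winv_coe, winv_coe, winv_coe, smul_inv, WithOne.coe_mul]
  jj u := by
    rcases wcases T u with rfl | ⟨s, rfl⟩
    · rw [winv_one, winv_one]
    · rw [winv_coe, winv_coe, sjj]
  jone := winv_one T
  regu u := by
    rcases wcases T u with rfl | ⟨s, rfl⟩
    · rw [winv_one, mul_one, mul_one]
    · rw [winv_coe, ← WithOne.coe_mul, ← WithOne.coe_mul, sreg]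
  comm p q hp hq := by
    rcases wcases T p with rfl | ⟨s, rfl⟩
    · rw [one_mul, mul_one]
    · rcases wcases T q with rfl | ⟨t, rfl⟩
      · rw [one_mul, mul_one]
      · rw [← WithOne.coe_mul] at hp hq
        rw [← WithOne.coe_mul, ← WithOne.coe_mul,
          scomm T (WithOne.coe_inj.mp hp) (WithOne.coe_inj.mp hq)]
  jidem p hp := by
    rcases wcases T p with rfl | ⟨s, rfl⟩
    · exact winv_one T
    · rw [← WithOne.coe_mul] at hp
      rw [winv_coe, sidem T (WithOne.coe_inj.mp hp)]

theorem coe_spow (x : T.carrier) : ∀ k : ℕ,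
    ((spow x k : T.carrier) : WithOne T.carrier) = (↑x : WithOne T.carrier) ^ (k + 1)
  | 0 => (pow_one _).symm
  | k + 1 => by
    show ((spow x k * x : T.carrier) : WithOne T.carrier) = _
    rw [WithOne.coe_mul, coe_spow x k, ← pow_succ]

theorem grp_of_isEIdem {x e : T.carrier} (hx : IsEIdem x e) :
    ∃ n : ℕ, GrpOf (↑e : WithOne T.carrier) ((↑x : WithOne T.carrier) ^ (n + 1)) := by
  obtain ⟨k, h1, h2, b, hb1, hb2, hxb, hbx⟩ := hx
  refine ⟨k, ?_, ?_, ↑b, ?_, ?_, ?_, ?_⟩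
  · rw [← coe_spow, ← WithOne.coe_mul, h1]
  · rw [← coe_spow, ← WithOne.coe_mul, h2]
  · rw [← WithOne.coe_mul, hb1]
  · rw [← WithOne.coe_mul, hb2]
  · rw [← coe_spow, ← WithOne.coe_mul, hxb]
  · rw [← coe_spow, ← WithOne.coe_mul, hbx]

end Bridge

/-- let `S ⊆ IS(X)` be a group-bound inverse subsemigroup,
`y = axa⁻¹` with `a⁻¹a ≥ e_x`, and `â = a e_x`. Then `â⁻¹â = e_x`,
`ââ⁻¹ = e_y`, `y e_y = â (x e_x) â⁻¹` and `x e_x = â⁻¹ (y e_y) â`; in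
particular `x e_x ∼_p y e_y`, hence `x e_x ∼ y e_y`. -/
theorem conj_restriction {X : Type*} (T : InvSubsemigroup X)
    (hGB : GroupBound T.carrier) (x y a ex ey : T.carrier)
    (hex : IsEIdem x ex) (hey : IsEIdem y ey)
    (hord : ∃ f : T.carrier, f * f = f ∧ ex = sinv T a * a * f)
    (hy : y = a * x * sinv T a) :
    sinv T (a * ex) * (a * ex) = ex ∧
    (a * ex) * sinv T (a * ex) = ey ∧
    y * ey = (a * ex) * (x * ex) * sinv T (a * ex) ∧
    x * ex = sinv T (a * ex) * (y * ey) * (a * ex) ∧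
    PrimConj (x * ex) (y * ey) ∧
    SgConj (x * ex) (y * ey) := by
  have hax := winv_ax T
  have hEx := grp_of_isEIdem T hex
  have hEy := grp_of_isEIdem T hey
  have hordM : ∃ F : WithOne T.carrier, F * F = F ∧
      (↑ex : WithOne T.carrier) = winv T ↑a * ↑a * F := by
    obtain ⟨f, hff, hef⟩ := hord
    refine ⟨↑f, ?_, ?_⟩
    · rw [← WithOne.coe_mul, hff]
    · rw [winv_coe, ← WithOne.coe_mul, ← WithOne.coe_mul, ← hef]
  have hyM : (↑y : WithOne T.carrier) = ↑a * ↑x * winv T ↑a := by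
    rw [winv_coe, ← WithOne.coe_mul, ← WithOne.coe_mul, hy]
  obtain ⟨g1, g2, g3, g4, g5⟩ := main_calc hax hEx hEy hordM hyM
  have S1 : sinv T (a * ex) * (a * ex) = ex := by
    apply WithOne.coe_inj.mp
    simp only [WithOne.coe_mul]
    rw [← winv_coe]
    simp only [WithOne.coe_mul]
    exact g1
  have S2 : (a * ex) * sinv T (a * ex) = ey := by
    apply WithOne.coe_inj.mp
    simp only [WithOne.coe_mul]
    rw [← winv_coe]
    simp only [WithOne.coe_mul]
    exact g2
  have S3 : y * ey = (a * ex) * (x * ex) * sinv T (a * ex) := by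
    apply WithOne.coe_inj.mp
    simp only [WithOne.coe_mul]
    rw [← winv_coe]
    simp only [WithOne.coe_mul]
    exact g3
  have S4 : x * ex = sinv T (a * ex) * (y * ey) * (a * ex) := by
    apply WithOne.coe_inj.mp
    simp only [WithOne.coe_mul]
    rw [← winv_coe]
    simp only [WithOne.coe_mul]
    exact g4
  have hpc : PrimConj (x * ex) (y * ey) := by
    refine ⟨winv T (↑a * ↑ex), (↑y * ↑ey) * (↑a * ↑ex), ?_, ?_⟩
    · rw [WithOne.coe_mul, g4, mul_assoc]
    · rw [WithOne.coe_mul, mul_assoc, g2, mul_assoc, g5]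
  exact ⟨S1, S2, S3, S4, hpc, Relation.TransGen.single hpc⟩

end SgConjPaper
end

section
/- Let S be a regular group-bound semigroup with finite D-classes and let a, b ∈ S be such that a e_a ≡ b e_b (their characters agree under every finite-dimensional complex representation of S). Then a e_a and b e_b belong to the same D-class of S. -/
namespace SgConjPaper

/-- Green's relation `R`. -/
def RRel {S : Type*} [Semigroup S] (x y : S) : Prop :=
  (∃ u : WithOne S, (x : WithOne S) = y * u) ∧ (∃ v : WithOne S, (y : WithOne S) = x * v)

/-- Green's relation `L`. -/
def LRel {S : Type*} [Semigroup S] (x y : S) : Prop :=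
  (∃ u : WithOne S, (x : WithOne S) = u * y) ∧ (∃ v : WithOne S, (y : WithOne S) = v * x)

/-- Green's relation `D` (= `L ∘ R`). -/
def DRel {S : Type*} [Semigroup S] (x y : S) : Prop := ∃ z : S, LRel x z ∧ RRel z y

/-- Green's relation `H`. -/
def HRel {S : Type*} [Semigroup S] (x y : S) : Prop := LRel x y ∧ RRel x y

/-- All `D`-classes of `S` are finite. -/
def FiniteDClasses (S : Type*) [Semigroup S] : Prop := ∀ x : S, {y : S | DRel x y}.Finite


section AuxSgConj
set_option linter.unusedSectionVars false
set_option linter.dupNamespace false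
set_option linter.unusedVariables false
variable {S : Type*} [Semigroup S]

lemma wone_cases (u : WithOne S) : u = 1 ∨ ∃ c : S, u = (c : WithOne S) := by
  induction u using WithOne.recOneCoe with
  | one => left; rfl
  | coe c => right; exact ⟨c, rfl⟩

lemma coe_mul_wone_ne_one (c : S) (q : WithOne S) : ∃ d : S, (c : WithOne S) * q = (d : WithOne S) := by
  rcases wone_cases q with rfl | ⟨c', rfl⟩
  · exact ⟨c, by rw [mul_one]⟩
  · exact ⟨c * c', by rw [WithOne.coe_mul]⟩

lemma wone_mul_coe_ne_one (q : WithOne S) (c : S) : ∃ d : S, q * (c : WithOne S) = (d : WithOne S) := by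
  rcases wone_cases q with rfl | ⟨c', rfl⟩
  · exact ⟨c, by rw [one_mul]⟩
  · exact ⟨c' * c, by rw [WithOne.coe_mul]⟩

lemma spow_succ (x : S) (n : ℕ) : spow x (n + 1) = spow x n * x := rfl

lemma mul_spow (x : S) (n : ℕ) : x * spow x n = spow x n * x := by
  induction n with
  | zero => rfl
  | succ n ih => rw [spow_succ, ← mul_assoc, ih]

lemma spow_coe (x : S) (n : ℕ) : ((spow x n : S) : WithOne S) = (x : WithOne S) ^ (n + 1) := by
  induction n with
  | zero => simp [spow]
  | succ n ih =>
      rw [spow_succ, WithOne.coe_mul, ih]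
      exact (pow_succ _ _).symm

lemma spow_add (x : S) (m n : ℕ) : spow x m * spow x n = spow x (m + n + 1) := by
  induction n with
  | zero => rfl
  | succ n ih =>
      rw [spow_succ, ← mul_assoc, ih]
      rfl

/-- `x ≤_J y`. -/
def leJ (x y : S) : Prop := ∃ p q : WithOne S, (x : WithOne S) = p * (y : WithOne S) * q

lemma leJ_refl (x : S) : leJ x x := ⟨1, 1, by rw [one_mul, mul_one]⟩

lemma leJ_trans {x y z : S} (h₁ : leJ x y) (h₂ : leJ y z) : leJ x z := by
  obtain ⟨p, q, h₁⟩ := h₁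
  obtain ⟨p', q', h₂⟩ := h₂
  exact ⟨p * p', q' * q, by rw [h₁, h₂]; simp [mul_assoc]⟩

lemma leJ_mul_left (x y : S) : leJ (x * y) y := ⟨(x : WithOne S), 1, by rw [WithOne.coe_mul, mul_one]⟩

lemma leJ_mul_right (x y : S) : leJ (x * y) x := ⟨1, (y : WithOne S), by rw [WithOne.coe_mul, one_mul]⟩

lemma LRel.leJ' {x y : S} (h : LRel x y) : leJ x y := by
  obtain ⟨⟨u, hu⟩, -⟩ := h
  exact ⟨u, 1, by rw [hu, mul_one]⟩

lemma RRel.leJ' {x y : S} (h : RRel x y) : leJ x y := by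
  obtain ⟨⟨u, hu⟩, -⟩ := h
  exact ⟨1, u, by rw [hu, one_mul]⟩

lemma lrel_refl (x : S) : LRel x x := ⟨⟨1, (one_mul _).symm⟩, ⟨1, (one_mul _).symm⟩⟩
lemma rrel_refl (x : S) : RRel x x := ⟨⟨1, (mul_one _).symm⟩, ⟨1, (mul_one _).symm⟩⟩
lemma lrel_symm {x y : S} (h : LRel x y) : LRel y x := ⟨h.2, h.1⟩
lemma rrel_symm {x y : S} (h : RRel x y) : RRel y x := ⟨h.2, h.1⟩
lemma lrel_trans {x y z : S} (h₁ : LRel x y) (h₂ : LRel y z) : LRel x z := by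
  obtain ⟨⟨u, hu⟩, ⟨v, hv⟩⟩ := h₁
  obtain ⟨⟨u', hu'⟩, ⟨v', hv'⟩⟩ := h₂
  exact ⟨⟨u * u', by rw [hu, hu', mul_assoc]⟩, ⟨v' * v, by rw [hv', hv, mul_assoc]⟩⟩
lemma rrel_trans {x y z : S} (h₁ : RRel x y) (h₂ : RRel y z) : RRel x z := by
  obtain ⟨⟨u, hu⟩, ⟨v, hv⟩⟩ := h₁
  obtain ⟨⟨u', hu'⟩, ⟨v', hv'⟩⟩ := h₂
  exact ⟨⟨u' * u, by rw [hu, hu', mul_assoc]⟩, ⟨v * v', by rw [hv', hv, mul_assoc]⟩⟩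

lemma pow_shift {M : Type*} [Monoid M] (x y : M) (n : ℕ) :
    (x * y) ^ n * x = x * (y * x) ^ n := by
  induction n with
  | zero => simp
  | succ n ih =>
      calc (x*y)^(n+1) * x = (x*y) * ((x*y)^n * x) := by rw [pow_succ', mul_assoc]
      _ = (x*y) * (x * (y*x)^n) := by rw [ih]
      _ = x * ((y*x) * (y*x)^n) := by simp [mul_assoc]
      _ = x * (y*x)^(n+1) := by rw [← pow_succ']

/-- iteration in a monoid -/
lemma iter_mon {M : Type*} [Monoid M] {a X q : M} (h : a = X * a * q) :
    ∀ n : ℕ, a = X ^ n * a * q ^ n := by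
  intro n
  induction n with
  | zero => simp
  | succ n ih =>
      calc a = X * a * q := h
      _ = X * (X ^ n * a * q ^ n) * q := by rw [← ih]
      _ = (X * X ^ n) * a * (q ^ n * q) := by simp [mul_assoc]
      _ = X ^ (n+1) * a * q ^ (n+1) := by rw [← pow_succ', ← pow_succ]

/-- Right stability, the key consequence of group-boundedness. -/
lemma stabR (hGB : GroupBound S) (a b : S) (h : leJ a (a * b)) :
    ∃ u : WithOne S, (a : WithOne S) = ((a * b : S) : WithOne S) * u := by
  obtain ⟨p, q, h⟩ := h
  obtain ⟨c, hc⟩ := coe_mul_wone_ne_one b q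
  have h' : (a : WithOne S) = p * (a : WithOne S) * (c : WithOne S) := by
    conv_lhs => rw [h]
    rw [← hc, WithOne.coe_mul]; simp [mul_assoc]
  obtain ⟨g, m, hg⟩ := hGB c
  obtain ⟨hg1, hg2, b', hb1, hb2, hb3, hb4⟩ := hg
  have hiter := iter_mon h' (m + 1)
  have hd : ((c:WithOne S)) ^ (m + 1) = ((spow c m : S) : WithOne S) := (spow_coe c m).symm
  rw [hd] at hiter
  -- a * g = a
  have hag : a * g = a := by
    have : ((a * g : S) : WithOne S) = (a : WithOne S) := by
      rw [WithOne.coe_mul]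
      calc (a : WithOne S) * (g : WithOne S)
          = p ^ (m+1) * (a:WithOne S) * ((spow c m : S) : WithOne S) * (g : WithOne S) := by
            rw [← hiter]
        _ = p ^ (m+1) * (a:WithOne S) * ((spow c m * g : S) : WithOne S) := by
            rw [WithOne.coe_mul, mul_assoc]
        _ = (a : WithOne S) := by rw [hg2, ← hiter]
    exact WithOne.coe_inj.mp this
  -- a = a * (spow c m) * b'
  have key : (a : WithOne S) = (a : WithOne S) * ((spow c m : S) : WithOne S) * (b' : WithOne S) := by
    calc (a : WithOne S) = ((a * g : S) : WithOne S) := by rw [hag]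
      _ = (a : WithOne S) * ((spow c m * b' : S) : WithOne S) := by
          rw [WithOne.coe_mul, hb3]
      _ = (a : WithOne S) * ((spow c m : S):WithOne S) * (b' : WithOne S) := by
          rw [WithOne.coe_mul, mul_assoc]
  -- now (spow c m) = c^(m+1) = (b*q)^(m+1) = b * (q * (b*q)^m)
  refine ⟨q * ((b:WithOne S) * q) ^ m * (b' : WithOne S), ?_⟩
  have hsp : ((spow c m : S) : WithOne S) = (b : WithOne S) * (q * ((b:WithOne S) * q) ^ m) := by
    rw [spow_coe, ← hc, pow_succ']
    simp [mul_assoc]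
  rw [key, hsp, WithOne.coe_mul]
  simp [mul_assoc]

/-- Left stability. -/
lemma stabL (hGB : GroupBound S) (a b : S) (h : leJ a (b * a)) :
    ∃ u : WithOne S, (a : WithOne S) = u * ((b * a : S) : WithOne S) := by
  obtain ⟨p, q, h⟩ := h
  obtain ⟨c, hc⟩ := wone_mul_coe_ne_one p b
  have h' : (a : WithOne S) = (c : WithOne S) * (a : WithOne S) * q := by
    conv_lhs => rw [h]
    rw [← hc, WithOne.coe_mul]; simp [mul_assoc]
  obtain ⟨g, m, hg⟩ := hGB c
  obtain ⟨hg1, hg2, b', hb1, hb2, hb3, hb4⟩ := hg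
  have hiter := iter_mon h' (m + 1)
  have hd : ((c:WithOne S)) ^ (m + 1) = ((spow c m : S) : WithOne S) := (spow_coe c m).symm
  rw [hd] at hiter
  have hag : g * a = a := by
    have : ((g * a : S) : WithOne S) = (a : WithOne S) := by
      rw [WithOne.coe_mul]
      calc (g : WithOne S) * (a : WithOne S)
          = (g : WithOne S) * (((spow c m : S) : WithOne S) * (a:WithOne S) * q ^ (m+1)) := by
            rw [← hiter]
        _ = ((g * spow c m : S) : WithOne S) * (a:WithOne S) * q ^ (m+1) := by
            rw [WithOne.coe_mul]; simp [mul_assoc]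
        _ = (a : WithOne S) := by rw [hg1, ← hiter]
    exact WithOne.coe_inj.mp this
  have key : (a : WithOne S) = (b' : WithOne S) * ((spow c m : S) : WithOne S) * (a : WithOne S) := by
    calc (a : WithOne S) = ((g * a : S) : WithOne S) := by rw [hag]
      _ = ((b' * spow c m : S) : WithOne S) * (a : WithOne S) := by
          rw [WithOne.coe_mul, hb4]
      _ = (b' : WithOne S) * ((spow c m : S):WithOne S) * (a : WithOne S) := by
          rw [WithOne.coe_mul]
  refine ⟨(b' : WithOne S) * (p * ((b:WithOne S) * p) ^ m), ?_⟩
  have hsp : ((spow c m : S) : WithOne S) = (p * ((b:WithOne S) * p) ^ m) * (b : WithOne S) := by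
    rw [spow_coe, ← hc, pow_succ, ← pow_shift]
    simp [mul_assoc]
  rw [key, hsp, WithOne.coe_mul]
  simp [mul_assoc]




lemma InMaxSubgroup.idem {e g : S} (h : InMaxSubgroup e g) : e * e = e := by
  obtain ⟨h1, h2, b, hb1, hb2, hb3, hb4⟩ := h
  calc e * e = e * (g * b) := by rw [hb3]
  _ = (e * g) * b := by rw [mul_assoc]
  _ = e := by rw [h1, hb3]

lemma inMaxSubgroup_self {e : S} (he : e * e = e) : InMaxSubgroup e e :=
  ⟨he, he, e, he, he, he, he⟩

lemma InMaxSubgroup.mul {e g h : S} (hg : InMaxSubgroup e g) (hh : InMaxSubgroup e h) :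
    InMaxSubgroup e (g * h) := by
  obtain ⟨hg1, hg2, b, hb1, hb2, hb3, hb4⟩ := hg
  obtain ⟨hh1, hh2, c, hc1, hc2, hc3, hc4⟩ := hh
  refine ⟨by rw [← mul_assoc, hg1], by rw [mul_assoc, hh2], c * b, by rw [← mul_assoc, hc1],
    by rw [mul_assoc, hb2], ?_, ?_⟩
  · calc g * h * (c * b) = g * (h * c) * b := by simp [mul_assoc]
    _ = (g * e) * b := by rw [hc3, mul_assoc]
    _ = e := by rw [hg2, hb3]
  · calc c * b * (g * h) = c * (b * g) * h := by simp [mul_assoc]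
    _ = (c * e) * h := by rw [hb4, mul_assoc]
    _ = e := by rw [hc2, hc4]

lemma InMaxSubgroup.spow_mem {e g : S} (hg : InMaxSubgroup e g) (n : ℕ) :
    InMaxSubgroup e (spow g n) := by
  induction n with
  | zero => exact hg
  | succ n ih => exact ih.mul hg

lemma InMaxSubgroup.lrel {e g : S} (h : InMaxSubgroup e g) : LRel g e := by
  obtain ⟨h1, h2, b, hb1, hb2, hb3, hb4⟩ := h
  exact ⟨⟨(g : WithOne S), by rw [← WithOne.coe_mul, h2]⟩,
    ⟨(b : WithOne S), by rw [← WithOne.coe_mul, hb4]⟩⟩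

lemma InMaxSubgroup.rrel {e g : S} (h : InMaxSubgroup e g) : RRel g e := by
  obtain ⟨h1, h2, b, hb1, hb2, hb3, hb4⟩ := h
  exact ⟨⟨(g : WithOne S), by rw [← WithOne.coe_mul, h1]⟩,
    ⟨(b : WithOne S), by rw [← WithOne.coe_mul, hb3]⟩⟩

lemma InMaxSubgroup.drel {e g : S} (h : InMaxSubgroup e g) : DRel e g :=
  ⟨g, lrel_symm h.lrel, rrel_refl g⟩

/-- The H-class of an idempotent consists of group elements. -/
lemma mem_maxSubgroup_of_HRel {e x : S} (he : e * e = e) (hL : LRel x e) (hR : RRel x e) :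
    InMaxSubgroup e x := by
  obtain ⟨⟨u₁, hu₁⟩, ⟨v, hv⟩⟩ := hR
  obtain ⟨⟨u₂, hu₂⟩, ⟨w, hw⟩⟩ := hL
  -- e * x = x
  have hex : ((e * x : S) : WithOne S) = (x : WithOne S) := by
    rw [WithOne.coe_mul]
    calc (e:WithOne S) * x = (e:WithOne S) * ((e:WithOne S) * u₁) := by rw [← hu₁]
    _ = ((e*e : S) : WithOne S) * u₁ := by rw [WithOne.coe_mul, mul_assoc]
    _ = (x : WithOne S) := by rw [he, hu₁]
  have hxe : ((x * e : S) : WithOne S) = (x : WithOne S) := by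
    rw [WithOne.coe_mul]
    calc (x:WithOne S) * e = (u₂ * (e:WithOne S)) * e := by rw [← hu₂]
    _ = u₂ * ((e*e : S) : WithOne S) := by rw [WithOne.coe_mul, mul_assoc]
    _ = (x : WithOne S) := by rw [he, hu₂]
  -- p := e * v * e, q := e * w * e
  obtain ⟨p, hp⟩ : ∃ p : S, (e:WithOne S) * v * (e:WithOne S) = (p : WithOne S) := by
    obtain ⟨d, hd⟩ := wone_mul_coe_ne_one ((e:WithOne S) * v) e
    exact ⟨d, hd⟩
  obtain ⟨q, hq⟩ : ∃ q : S, (e:WithOne S) * w * (e:WithOne S) = (q : WithOne S) := by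
    obtain ⟨d, hd⟩ := wone_mul_coe_ne_one ((e:WithOne S) * w) e
    exact ⟨d, hd⟩
  -- x * p = e
  have hxp : (x : WithOne S) * (p : WithOne S) = (e : WithOne S) := by
    rw [← hp]
    calc (x:WithOne S) * ((e:WithOne S) * v * (e:WithOne S))
        = (((x * e : S) : WithOne S) * v) * (e:WithOne S) := by
          rw [WithOne.coe_mul]; simp [mul_assoc]
    _ = ((x:WithOne S) * v) * (e:WithOne S) := by rw [hxe]
    _ = ((e:WithOne S)) * (e:WithOne S) := by rw [← hv]
    _ = (e : WithOne S) := by rw [← WithOne.coe_mul, he]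
  have hqx : (q : WithOne S) * (x : WithOne S) = (e : WithOne S) := by
    rw [← hq]
    calc ((e:WithOne S) * w * (e:WithOne S)) * (x:WithOne S)
        = (e:WithOne S) * w * ((e * x : S) : WithOne S) := by
          rw [WithOne.coe_mul]; simp [mul_assoc]
    _ = (e:WithOne S) * (w * (x:WithOne S)) := by rw [hex, mul_assoc]
    _ = (e:WithOne S) * (e:WithOne S) := by rw [← hw]
    _ = (e : WithOne S) := by rw [← WithOne.coe_mul, he]
  have hep : (e : WithOne S) * (p : WithOne S) = (p : WithOne S) := by
    rw [← hp]
    calc (e:WithOne S) * ((e:WithOne S) * v * (e:WithOne S))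
        = ((e*e : S) : WithOne S) * v * (e:WithOne S) := by rw [WithOne.coe_mul]; simp [mul_assoc]
    _ = (e:WithOne S) * v * (e:WithOne S) := by rw [he]
  have hpe : (p : WithOne S) * (e : WithOne S) = (p : WithOne S) := by
    rw [← hp]
    calc (e:WithOne S) * v * (e:WithOne S) * (e:WithOne S)
        = (e:WithOne S) * v * ((e*e : S) : WithOne S) := by rw [WithOne.coe_mul, mul_assoc]
    _ = (e:WithOne S) * v * (e:WithOne S) := by rw [he]
  have hqe : (q : WithOne S) * (e : WithOne S) = (q : WithOne S) := by
    rw [← hq]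
    calc (e:WithOne S) * w * (e:WithOne S) * (e:WithOne S)
        = (e:WithOne S) * w * ((e*e : S) : WithOne S) := by rw [WithOne.coe_mul, mul_assoc]
    _ = (e:WithOne S) * w * (e:WithOne S) := by rw [he]
  -- p = q
  have hpq : (p : WithOne S) = (q : WithOne S) := by
    calc (p : WithOne S) = (e:WithOne S) * (p:WithOne S) := hep.symm
    _ = ((q:WithOne S) * (x:WithOne S)) * (p:WithOne S) := by rw [hqx]
    _ = (q:WithOne S) * ((x:WithOne S) * (p:WithOne S)) := by rw [mul_assoc]
    _ = (q:WithOne S) := by rw [hxp, hqe]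
  refine ⟨WithOne.coe_inj.mp hex, WithOne.coe_inj.mp hxe, p, ?_, ?_, ?_, ?_⟩
  · exact WithOne.coe_inj.mp (by rw [WithOne.coe_mul]; exact hep)
  · exact WithOne.coe_inj.mp (by rw [WithOne.coe_mul]; exact hpe)
  · exact WithOne.coe_inj.mp (by rw [WithOne.coe_mul]; exact hxp)
  · exact WithOne.coe_inj.mp (by rw [WithOne.coe_mul, hpq]; exact hqx)

/-- In a semigroup with finite D-classes, every group element has finite order. -/
lemma exists_spow_eq_idem {e u : S} (hD : FiniteDClasses S) (hu : InMaxSubgroup e u) :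
    ∃ n : ℕ, spow u n = e := by
  have hmem : ∀ n : ℕ, spow u n ∈ {y : S | DRel e y} := fun n => (hu.spow_mem n).drel
  have hfin : {y : S | DRel e y}.Finite := hD e
  obtain ⟨i, -, j, -, hij, hspow⟩ :=
    Set.infinite_univ.exists_ne_map_eq_of_mapsTo (fun n _ => hmem n) hfin
  -- wlog i < j
  rcases Nat.lt_or_ge i j with hlt | hge
  · -- spow u i = spow u j, i < j
    refine ⟨j - i - 1, ?_⟩
    have hsplit : spow u i * spow u (j - i - 1) = spow u j := by
      rw [spow_add]; congr 1; omega
    -- x * y = x with x, y group elements implies y = e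
    obtain ⟨h1, h2, b, hb1, hb2, hb3, hb4⟩ := hu.spow_mem i
    have hx : spow u i * spow u (j-i-1) = spow u i := by rw [hsplit, hspow]
    calc spow u (j-i-1) = e * spow u (j-i-1) := ((hu.spow_mem (j-i-1)).1).symm
    _ = (b * spow u i) * spow u (j-i-1) := by rw [hb4]
    _ = b * (spow u i * spow u (j-i-1)) := by rw [mul_assoc]
    _ = b * spow u i := by rw [hx]
    _ = e := hb4
  · have hlt : j < i := by omega
    refine ⟨i - j - 1, ?_⟩
    have hsplit : spow u j * spow u (i - j - 1) = spow u i := by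
      rw [spow_add]; congr 1; omega
    obtain ⟨h1, h2, b, hb1, hb2, hb3, hb4⟩ := hu.spow_mem j
    have hx : spow u j * spow u (i-j-1) = spow u j := by rw [hsplit, ← hspow]
    calc spow u (i-j-1) = e * spow u (i-j-1) := ((hu.spow_mem (i-j-1)).1).symm
    _ = (b * spow u j) * spow u (i-j-1) := by rw [hb4]
    _ = b * (spow u j * spow u (i-j-1)) := by rw [mul_assoc]
    _ = b * spow u j := by rw [hx]
    _ = e := hb4

/-- helper: x*(y*z) = y*(x*z) when x*y = y*x -/
lemma comm_assoc {x y : S} (h : x * y = y * x) (z : S) : x * (y * z) = y * (x * z) := by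
  rw [← mul_assoc, h, mul_assoc]

/-- e_a commutes with a. -/
lemma eIdem_comm {a e : S} (hea : IsEIdem a e) : e * a = a * e := by
  obtain ⟨k, hg⟩ := hea
  set g := spow a k with hgdef
  obtain ⟨hg1, hg2, b, hb1, hb2, hb3, hb4⟩ := hg
  have hcomm : a * g = g * a := (mul_spow a k).symm ▸ (mul_spow a k)
  have hcomm' : a * g = g * a := mul_spow a k
  -- e*a = b*a*g,  a*e = g*a*b
  have h₁ : e * a = b * a * g := by
    calc e * a = (b * g) * a := by rw [hb4]
    _ = b * (g * a) := by rw [mul_assoc]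
    _ = b * (a * g) := by rw [← hcomm']
    _ = b * a * g := by rw [mul_assoc]
  have h₂ : a * e = g * a * b := by
    calc a * e = a * (g * b) := by rw [hb3]
    _ = (a * g) * b := by rw [mul_assoc]
    _ = (g * a) * b := by rw [hcomm']
  have h₃ : e * (a * e) = a * e := by
    calc e * (a * e) = e * (g * a * b) := by rw [h₂]
    _ = e * (g * (a * b)) := by rw [mul_assoc g]
    _ = (e * g) * (a * b) := by rw [mul_assoc]
    _ = g * (a * b) := by rw [hg1]
    _ = g * a * b := by rw [mul_assoc]
    _ = a * e := h₂.symm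
  have h₄ : (e * a) * e = e * a := by
    calc (e * a) * e = (b * a * g) * e := by rw [h₁]
    _ = b * a * (g * e) := by rw [mul_assoc]
    _ = b * a * g := by rw [hg2]
    _ = e * a := h₁.symm
  calc e * a = (e * a) * e := h₄.symm
  _ = e * (a * e) := by rw [mul_assoc]
  _ = a * e := h₃

lemma eIdem_comm_spow {a e : S} (hea : IsEIdem a e) (n : ℕ) :
    e * spow a n = spow a n * e := by
  induction n with
  | zero => exact eIdem_comm hea
  | succ n ih =>
      calc e * spow a (n+1) = e * (spow a n * a) := rfl
      _ = (e * spow a n) * a := by rw [mul_assoc]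
      _ = spow a n * (e * a) := by rw [ih, mul_assoc]
      _ = spow a n * (a * e) := by rw [eIdem_comm hea]
      _ = (spow a n * a) * e := by rw [mul_assoc]
      _ = spow a (n+1) * e := rfl

/-- `a * e_a` is a group element over `e_a`. -/
lemma aea_mem_maxSubgroup {a e : S} (hea : IsEIdem a e) : InMaxSubgroup e (a * e) := by
  obtain ⟨k, hg⟩ := hea
  have hcm : e * a = a * e := eIdem_comm ⟨k, hg⟩
  obtain ⟨hg1, hg2, b, hb1, hb2, hb3, hb4⟩ := hg
  have hee : e * e = e := InMaxSubgroup.idem ⟨hg1, hg2, b, hb1, hb2, hb3, hb4⟩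
  have h1 : e * (a * e) = a * e := by rw [← mul_assoc, hcm, mul_assoc, hee]
  have h2 : (a * e) * e = a * e := by rw [mul_assoc, hee]
  cases k with
  | zero =>
      -- g = a
      have : a * e = a := hg2
      rw [this]
      exact ⟨hg1, hg2, b, hb1, hb2, hb3, hb4⟩
  | succ k' =>
      -- inverse: spow a k' * b * e
      refine ⟨h1, h2, spow a k' * (b * e), ?_, ?_, ?_, ?_⟩
      · calc e * (spow a k' * (b * e)) = (e * spow a k') * (b * e) := by rw [mul_assoc]
        _ = spow a k' * (e * (b * e)) := by rw [eIdem_comm_spow ⟨k'+1, hg1, hg2, b, hb1, hb2, hb3, hb4⟩ k', mul_assoc]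
        _ = spow a k' * ((e * b) * e) := by rw [mul_assoc]
        _ = spow a k' * (b * e) := by rw [hb1]
      · calc (spow a k' * (b * e)) * e = spow a k' * (b * (e * e)) := by simp [mul_assoc]
        _ = spow a k' * (b * e) := by rw [hee]
      · -- (a*e) * (spow a k' * (b*e)) = e
        calc (a * e) * (spow a k' * (b * e)) = a * ((e * spow a k') * (b * e)) := by
              simp [mul_assoc]
        _ = a * ((spow a k' * e) * (b * e)) := by rw [eIdem_comm_spow ⟨k'+1, hg1, hg2, b, hb1, hb2, hb3, hb4⟩ k']
        _ = a * (spow a k' * ((e * b) * e)) := by simp [mul_assoc]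
        _ = a * (spow a k' * (b * e)) := by rw [hb1]
        _ = (a * spow a k') * (b * e) := by rw [mul_assoc]
        _ = (spow a k' * a) * (b * e) := by rw [mul_spow]
        _ = spow a (k'+1) * (b * e) := rfl
        _ = (spow a (k'+1) * b) * e := by rw [mul_assoc]
        _ = e * e := by rw [hb3]
        _ = e := hee
      · -- (spow a k' * (b*e)) * (a*e) = e
        -- b commutes with (a*e)?  use: b * (a*e) = (a*e) * b
        have hcab : b * (a * e) = (a * e) * b := by
          -- b * c = b * c * e = b * c * (g * b) = b * (c*g) * b = b * (g*c) * b = (b*g)*(c*b) = e*(c*b) = c*b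
          -- where c = a*e, need c*g = g*c and e*(c*b) = c*b?? e*c = c (h1)
          have hcg : (a * e) * spow a (k'+1) = spow a (k'+1) * (a * e) := by
            calc (a*e) * spow a (k'+1) = a * (e * spow a (k'+1)) := by rw [mul_assoc]
            _ = a * (spow a (k'+1) * e) := by rw [eIdem_comm_spow ⟨k'+1, hg1, hg2, b, hb1, hb2, hb3, hb4⟩ (k'+1)]
            _ = (a * spow a (k'+1)) * e := by rw [mul_assoc]
            _ = (spow a (k'+1) * a) * e := by rw [mul_spow]
            _ = spow a (k'+1) * (a * e) := by rw [mul_assoc]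
          calc b * (a * e) = b * ((a * e) * e) := by rw [h2]
          _ = b * ((a * e) * (spow a (k'+1) * b)) := by rw [hb3]
          _ = b * (((a * e) * spow a (k'+1)) * b) := by rw [mul_assoc (a*e)]
          _ = b * ((spow a (k'+1) * (a * e)) * b) := by rw [hcg]
          _ = (b * spow a (k'+1)) * ((a * e) * b) := by simp [mul_assoc]
          _ = e * ((a * e) * b) := by rw [hb4]
          _ = (e * (a * e)) * b := (mul_assoc e (a*e) b).symm
          _ = (a * e) * b := by rw [h1]
        calc (spow a k' * (b * e)) * (a * e)
            = spow a k' * (b * (e * (a * e))) := by simp [mul_assoc]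
        _ = spow a k' * (b * (a * e)) := by rw [h1]
        _ = spow a k' * ((a * e) * b) := by rw [hcab]
        _ = spow a k' * (a * (e * b)) := by rw [mul_assoc a]
        _ = spow a k' * (a * b) := by rw [hb1]
        _ = (spow a k' * a) * b := by rw [mul_assoc]
        _ = spow a (k'+1) * b := rfl
        _ = e := hb3



def Le (e : S) : Set S := {l | LRel l e}

lemma e_mem_Le (e : S) : e ∈ Le e := lrel_refl e

lemma Le_def {e l : S} (hl : l ∈ Le e) : LRel l e := hl

lemma Le_mul_e {e l : S} (he : e * e = e) (hl : l ∈ Le e) : l * e = l := by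
  obtain ⟨⟨u, hu⟩, -⟩ := hl
  apply WithOne.coe_inj.mp
  rw [WithOne.coe_mul, hu, mul_assoc, ← WithOne.coe_mul, he]

lemma lrel_mul_right {x y : S} (h : LRel x y) (s : S) : LRel (x * s) (y * s) := by
  obtain ⟨⟨u, hu⟩, ⟨v, hv⟩⟩ := h
  constructor
  · exact ⟨u, by rw [WithOne.coe_mul, WithOne.coe_mul, hu, mul_assoc]⟩
  · exact ⟨v, by rw [WithOne.coe_mul, WithOne.coe_mul, hv, mul_assoc]⟩

lemma Le_mul_g {e l g : S} (hl : l ∈ Le e) (hg : InMaxSubgroup e g) : l * g ∈ Le e := by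
  have h1 : LRel (l * g) (e * g) := lrel_mul_right hl g
  rw [hg.1] at h1
  exact lrel_trans h1 hg.lrel

lemma InMaxSubgroup.inv_mem {e g : S} (hg : InMaxSubgroup e g) :
    ∃ b, InMaxSubgroup e b ∧ g * b = e ∧ b * g = e := by
  obtain ⟨h1, h2, b, hb1, hb2, hb3, hb4⟩ := hg
  exact ⟨b, ⟨hb1, hb2, g, h1, h2, hb4, hb3⟩, hb3, hb4⟩

/-- If `s·(t·l)` stays in the L-class of `e` then so does `t·l` (uses stability). -/
lemma key_mem (hGB : GroupBound S) {e t l : S} (hl : l ∈ Le e) {s : S}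
    (h : s * (t * l) ∈ Le e) : t * l ∈ Le e := by
  have h1 : leJ e (s * (t * l)) := (lrel_symm (Le_def h)).leJ'
  have h2 : leJ e (t * l) := leJ_trans h1 (leJ_mul_left s (t * l))
  have h3 : leJ l (t * l) := leJ_trans (Le_def hl).leJ' h2
  obtain ⟨u, hu⟩ := stabL hGB l t h3
  obtain ⟨⟨u₀, hu₀⟩, ⟨v₀, hv₀⟩⟩ := Le_def hl
  constructor
  · exact ⟨(t : WithOne S) * u₀, by rw [WithOne.coe_mul, hu₀, mul_assoc]⟩
  · exact ⟨v₀ * u, by rw [mul_assoc, ← hu, hv₀]⟩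

/-- The orbit (= H-class) equivalence on the L-class of `e`. -/
def orbSetoid (e : S) (he : e * e = e) : Setoid ↥(Le e) where
  r l l' := ∃ g : S, InMaxSubgroup e g ∧ (l' : S) = (l : S) * g
  iseqv := by
    constructor
    · exact fun l => ⟨e, inMaxSubgroup_self he, (Le_mul_e he l.2).symm⟩
    · rintro l l' ⟨g, hg, heq⟩
      obtain ⟨b, hb, hgb, hbg⟩ := hg.inv_mem
      refine ⟨b, hb, ?_⟩
      rw [heq, mul_assoc, hgb, Le_mul_e he l.2]
    · rintro l l' l'' ⟨g, hg, heq⟩ ⟨g', hg', heq'⟩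
      exact ⟨g * g', hg.mul hg', by rw [heq', heq, mul_assoc]⟩

/-- The partial action of `S` on the H-classes inside the L-class of `e`. -/
noncomputable def actFun (e : S) (he : e * e = e) (s : S) (l : ↥(Le e)) :
    Option (Quotient (orbSetoid e he)) := by
  classical
  exact if h : s * (l : S) ∈ Le e then
    some (Quotient.mk (orbSetoid e he) ⟨s * (l : S), h⟩) else none

lemma actFun_pos {e : S} (he : e * e = e) {s : S} {l : ↥(Le e)} (h : s * (l : S) ∈ Le e) :
    actFun e he s l = some (Quotient.mk (orbSetoid e he) ⟨s * (l : S), h⟩) := by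
  unfold actFun
  exact dif_pos h

lemma actFun_neg {e : S} (he : e * e = e) {s : S} {l : ↥(Le e)} (h : ¬ (s * (l : S) ∈ Le e)) :
    actFun e he s l = none := by
  unfold actFun
  exact dif_neg h

lemma actFun_congr (e : S) (he : e * e = e) (s : S) (l l' : ↥(Le e))
    (hr : (orbSetoid e he).r l l') : actFun e he s l = actFun e he s l' := by
  obtain ⟨g, hg, heq⟩ := hr
  have hmul : s * (l' : S) = (s * (l : S)) * g := by rw [heq, mul_assoc]
  by_cases hsl : s * (l : S) ∈ Le e
  · have hsl' : s * (l' : S) ∈ Le e := by rw [hmul]; exact Le_mul_g hsl hg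
    rw [actFun_pos he hsl, actFun_pos he hsl']
    exact congrArg some (Quotient.sound ⟨g, hg, hmul⟩)
  · have hsl' : ¬ (s * (l' : S) ∈ Le e) := by
      intro hmem
      apply hsl
      obtain ⟨b, hb, hgb, hbg⟩ := hg.inv_mem
      have : (s * (l' : S)) * b = s * (l : S) := by
        rw [hmul, mul_assoc, hgb, mul_assoc, Le_mul_e he l.2]
      rw [← this]
      exact Le_mul_g hmem hb
    rw [actFun_neg he hsl, actFun_neg he hsl']

noncomputable def act (e : S) (he : e * e = e) (s : S) :
    Quotient (orbSetoid e he) → Option (Quotient (orbSetoid e he)) :=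
  Quotient.lift (actFun e he s) (actFun_congr e he s)

lemma act_mk (e : S) (he : e * e = e) (s : S) (l : ↥(Le e)) :
    act e he s (Quotient.mk (orbSetoid e he) l) = actFun e he s l := rfl

lemma act_mul (hGB : GroupBound S) (e : S) (he : e * e = e) (s t : S)
    (q : Quotient (orbSetoid e he)) :
    act e he (s * t) q = (act e he t q).bind (act e he s) := by
  induction q using Quotient.ind with
  | _ l =>
    rw [act_mk, act_mk]
    by_cases htl : t * (l : S) ∈ Le e
    · rw [actFun_pos he htl, Option.bind_some, act_mk]
      have hassoc : s * ((⟨t * (l:S), htl⟩ : ↥(Le e)) : S) = (s * t) * (l : S) := by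
        show s * (t * (l:S)) = (s * t) * (l : S)
        rw [mul_assoc]
      by_cases hstl : (s * t) * (l : S) ∈ Le e
      · rw [actFun_pos he hstl]
        have h2 : s * ((⟨t * (l:S), htl⟩ : ↥(Le e)) : S) ∈ Le e := by rw [hassoc]; exact hstl
        rw [actFun_pos he h2]
        congr 1
        apply Quotient.sound
        refine ⟨e, inMaxSubgroup_self he, ?_⟩
        show s * (t * (l:S)) = ((s * t) * (l:S)) * e
        rw [Le_mul_e he hstl]
        exact (mul_assoc _ _ _).symm
      · rw [actFun_neg he hstl]
        have h2 : ¬ (s * ((⟨t * (l:S), htl⟩ : ↥(Le e)) : S) ∈ Le e) := by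
          rw [hassoc]; exact hstl
        rw [actFun_neg he h2]
    · rw [actFun_neg he htl, Option.bind_none]
      have hstl : ¬ ((s * t) * (l : S) ∈ Le e) := by
        intro hmem
        exact htl (key_mem hGB l.2 (by rwa [← mul_assoc]))
      rw [actFun_neg he hstl]

/-- Fixed points of a group element over `e` on the `e`-space: only the class of `e`. -/
lemma act_fix_iff (hGB : GroupBound S) (hD : FiniteDClasses S) {e u : S}
    (he : e * e = e) (hu : InMaxSubgroup e u) (q : Quotient (orbSetoid e he)) :
    act e he u q = some q ↔ q = Quotient.mk (orbSetoid e he) ⟨e, e_mem_Le e⟩ := by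
  induction q using Quotient.ind with
  | _ l =>
    constructor
    · intro h
      rw [act_mk] at h
      by_cases hul : u * (l : S) ∈ Le e
      swap
      · rw [actFun_neg he hul] at h; exact absurd h (by simp)
      rw [actFun_pos he hul] at h
      have h' := Quotient.exact (Option.some_injective _ h)
      obtain ⟨g, hg, heq⟩ := h'
      have heq' : (l : S) = u * (l : S) * g := heq
      have hiter : ∀ n : ℕ, (l : S) = spow u n * (l : S) * spow g n := by
        intro n
        induction n with
        | zero => exact heq'
        | succ n ih =>
            calc (l : S) = u * (l:S) * g := heq'
            _ = u * (spow u n * (l:S) * spow g n) * g := by rw [← ih]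
            _ = (u * spow u n) * (l:S) * (spow g n * g) := by simp [mul_assoc]
            _ = spow u (n+1) * (l:S) * spow g (n+1) := by rw [mul_spow]; rfl
      obtain ⟨N, hN⟩ := exists_spow_eq_idem hD hu
      have hel := hiter N
      rw [hN] at hel
      set hh := spow g N with hhdef
      have hhg : InMaxSubgroup e hh := hg.spow_mem N
      obtain ⟨b, hb, hgb, hbg⟩ := hhg.inv_mem
      -- e*l = l*b
      have hel2 : (l : S) * b = e * (l : S) := by
        calc (l:S) * b = (e * (l:S) * hh) * b := by rw [← hel]
        _ = (e * (l:S)) * (hh * b) := by rw [mul_assoc]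
        _ = (e * (l:S)) * e := by rw [hgb]
        _ = e * ((l:S) * e) := by rw [mul_assoc]
        _ = e * (l:S) := by rw [Le_mul_e he l.2]
      have hmem : e * (l : S) ∈ Le e := by rw [← hel2]; exact Le_mul_g l.2 hb
      have h4 : leJ e (e * (l : S)) := (lrel_symm (Le_def hmem)).leJ'
      obtain ⟨w, hw⟩ := stabR hGB e (l : S) h4
      have hR : RRel (e * (l : S)) e :=
        ⟨⟨(l : S), by rw [WithOne.coe_mul]⟩, ⟨w, hw⟩⟩
      have hG : InMaxSubgroup e (e * (l : S)) := mem_maxSubgroup_of_HRel he hmem hR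
      have hlG : InMaxSubgroup e (l : S) := by
        rw [hel]
        exact hG.mul hhg
      obtain ⟨c, hc, hlc, hcl⟩ := hlG.inv_mem
      exact Quotient.sound ⟨c, hc, hlc.symm⟩
    · intro h
      rw [h, act_mk]
      have hue : u * ((⟨e, e_mem_Le e⟩ : ↥(Le e)) : S) ∈ Le e := by
        show u * e ∈ Le e
        rw [hu.2.1]
        exact hu.lrel
      rw [actFun_pos he hue]
      congr 1
      apply Quotient.sound
      show ∃ g : S, InMaxSubgroup e g ∧ (e : S) = (u * e) * g
      obtain ⟨b, hb, hub, hbu⟩ := hu.inv_mem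
      exact ⟨b, hb, by rw [hu.2.1, hub]⟩

lemma iter_fix {v l g : S} (h : l = v * l * g) (n : ℕ) :
    l = spow v n * l * spow g n := by
  induction n with
  | zero => exact h
  | succ n ih =>
      calc l = v * l * g := h
      _ = v * (spow v n * l * spow g n) * g := by rw [← ih]
      _ = (v * spow v n) * l * (spow g n * g) := by simp [mul_assoc]
      _ = spow v (n+1) * l * spow g (n+1) := by rw [mul_spow]; rfl

lemma act_nofix (hGB : GroupBound S) (hD : FiniteDClasses S) {e f v : S}
    (he : e * e = e) (hv : InMaxSubgroup f v) (hnot : ¬ leJ e f)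
    (q : Quotient (orbSetoid e he)) : act e he v q ≠ some q := by
  induction q using Quotient.ind with
  | _ l =>
    intro h
    rw [act_mk] at h
    by_cases hvl : v * (l : S) ∈ Le e
    swap
    · rw [actFun_neg he hvl] at h; exact absurd h (by simp)
    rw [actFun_pos he hvl] at h
    obtain ⟨g, hg, heq⟩ := Quotient.exact (Option.some_injective _ h)
    have heq' : (l : S) = v * (l : S) * g := heq
    obtain ⟨N, hN⟩ := exists_spow_eq_idem hD hv
    have hel := iter_fix heq' N
    rw [hN] at hel
    -- hel : l = f * l * spow g N
    obtain ⟨-, ⟨w, hw⟩⟩ := Le_def l.2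
    apply hnot
    refine ⟨w, ((l : S) * spow g N : S), ?_⟩
    rw [hw]
    conv_lhs => rw [hel]
    rw [WithOne.coe_mul, WithOne.coe_mul, WithOne.coe_mul]
    simp [mul_assoc]

lemma leJ_of_charEq (hGB : GroupBound S) (hD : FiniteDClasses S) {e f u v : S}
    (he : e * e = e) (hf : f * f = f) (hu : InMaxSubgroup e u) (hv : InMaxSubgroup f v)
    (hchar : CharEq u v) : leJ e f := by
  by_contra hnot
  classical
  haveI fin1 : Fintype ↥(Le e) :=
    Set.Finite.fintype ((hD e).subset (fun y hy => ⟨y, lrel_symm (Le_def hy), rrel_refl y⟩))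
  haveI fin2 : Finite (Quotient (orbSetoid e he)) := Quotient.finite _
  haveI fin3 : Fintype (Quotient (orbSetoid e he)) := Fintype.ofFinite _
  set n := Fintype.card (Quotient (orbSetoid e he)) with hn
  set eqv : Quotient (orbSetoid e he) ≃ Fin n := Fintype.equivFin _ with heqv
  set mat : S → Matrix (Fin n) (Fin n) ℂ :=
    fun s i j => if act e he s (eqv.symm j) = some (eqv.symm i) then 1 else 0 with hmat
  have matApply : ∀ s i j, mat s i j
      = if act e he s (eqv.symm j) = some (eqv.symm i) then 1 else 0 := fun s i j => rfl
  have mat_mul : ∀ s t : S, mat (s * t) = mat s * mat t := by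
    intro s t
    ext i j
    rw [Matrix.mul_apply, matApply]
    rcases hcase : act e he t (eqv.symm j) with _ | ν
    · have hz : ∀ k ∈ Finset.univ, mat s i k * mat t k j = 0 := by
        intro k _
        rw [matApply, matApply, hcase]
        simp
      rw [Finset.sum_congr rfl hz, act_mul hGB e he s t, hcase]
      simp
    · rw [Finset.sum_eq_single (eqv ν)]
      · rw [matApply, matApply, hcase, Equiv.symm_apply_apply,
          act_mul hGB e he s t, hcase, Option.bind_some]
        simp
      · intro k _ hk
        rw [matApply t k j, hcase]
        have : ¬ (some ν = some (eqv.symm k)) := by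
          intro hc
          apply hk
          have := Option.some_injective _ hc
          rw [this, Equiv.apply_symm_apply]
        simp [this]
      · intro hmem
        exact absurd (Finset.mem_univ _) hmem
  let φ : S →ₙ* Module.End ℂ (Fin n → ℂ) :=
    { toFun := fun s => Matrix.toLin' (mat s),
      map_mul' := fun s t => by
        show Matrix.toLin' (mat (s * t)) = _
        rw [mat_mul, Matrix.toLin'_mul]
        rfl }
  have htr : ∀ s : S, LinearMap.trace ℂ (Fin n → ℂ) (φ s) = Matrix.trace (mat s) := by
    intro s
    show LinearMap.trace ℂ (Fin n → ℂ) (Matrix.toLin' (mat s)) = _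
    rw [LinearMap.trace_eq_matrix_trace ℂ (Pi.basisFun ℂ (Fin n)),
      LinearMap.toMatrix_eq_toMatrix', LinearMap.toMatrix'_toLin']
  have h1 : Matrix.trace (mat u) = 1 := by
    have hdiag : ∀ i : Fin n, (mat u) i i =
        if i = eqv (Quotient.mk (orbSetoid e he) ⟨e, e_mem_Le e⟩) then (1:ℂ) else 0 := by
      intro i
      rw [matApply]
      by_cases hfix : act e he u (eqv.symm i) = some (eqv.symm i)
      · have h2 := (act_fix_iff hGB hD he hu (eqv.symm i)).mp hfix
        have h3 : i = eqv (Quotient.mk (orbSetoid e he) ⟨e, e_mem_Le e⟩) := by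
          rw [← h2, Equiv.apply_symm_apply]
        rw [if_pos hfix, if_pos h3]
      · have h3 : ¬ (i = eqv (Quotient.mk (orbSetoid e he) ⟨e, e_mem_Le e⟩)) := by
          intro hc
          apply hfix
          rw [(act_fix_iff hGB hD he hu (eqv.symm i))]
          rw [hc, Equiv.symm_apply_apply]
        rw [if_neg hfix, if_neg h3]
    simp only [Matrix.trace, Matrix.diag]
    rw [Finset.sum_congr rfl (fun i _ => hdiag i)]
    simp
  have h0 : Matrix.trace (mat v) = 0 := by
    have hdiag : ∀ i : Fin n, (mat v) i i = 0 := by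
      intro i
      rw [matApply]
      simp [act_nofix hGB hD he hv hnot (eqv.symm i)]
    simp only [Matrix.trace, Matrix.diag]
    rw [Finset.sum_congr rfl (fun i _ => hdiag i)]
    simp
  have hfd : FiniteDimensional ℂ (Fin n → ℂ) := by infer_instance
  have hc := hchar (Fin n → ℂ) inferInstance inferInstance hfd φ
  rw [htr u, htr v, h1, h0] at hc
  exact one_ne_zero hc

lemma drel_of_leJ_leJ (hGB : GroupBound S) {e f u v : S}
    (hu : InMaxSubgroup e u) (hv : InMaxSubgroup f v)
    (hef : leJ e f) (hfe : leJ f e) : DRel u v := by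
  -- produce z : S with LRel e z and RRel z f
  obtain ⟨z, hez, hzf⟩ : ∃ z : S, LRel e z ∧ RRel z f := by
    obtain ⟨p, q, hpq⟩ := hfe
    rcases wone_cases p with rfl | ⟨d, rfl⟩
    · rcases wone_cases q with rfl | ⟨c, rfl⟩
      · -- f = e
        have : f = e := WithOne.coe_inj.mp (by rw [hpq, one_mul, mul_one])
        exact ⟨e, lrel_refl e, this ▸ rrel_refl e⟩
      · -- f = e * c
        have hfec : f = e * c := WithOne.coe_inj.mp (by rw [hpq, one_mul, WithOne.coe_mul])
        have hJ : leJ e (e * c) := by rw [← hfec]; exact hef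
        obtain ⟨w, hw⟩ := stabR hGB e c hJ
        refine ⟨e, lrel_refl e, ?_⟩
        rw [hfec]
        exact ⟨⟨w, hw⟩, ⟨(c : WithOne S), by rw [WithOne.coe_mul]⟩⟩
    · rcases wone_cases q with rfl | ⟨c, rfl⟩
      · -- f = d * e
        have hfde : f = d * e := WithOne.coe_inj.mp (by rw [hpq, mul_one, WithOne.coe_mul])
        have hJ : leJ e (d * e) := by rw [← hfde]; exact hef
        obtain ⟨w, hw⟩ := stabL hGB e d hJ
        refine ⟨d * e, ⟨⟨w, hw⟩, ⟨(d : WithOne S), by rw [WithOne.coe_mul]⟩⟩, ?_⟩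
        rw [hfde]
        exact rrel_refl _
      · -- f = (d * e) * c
        have hfdec : f = (d * e) * c := WithOne.coe_inj.mp
          (by rw [hpq, WithOne.coe_mul, WithOne.coe_mul])
        have hJ1 : leJ e (d * e) :=
          leJ_trans hef (hfdec ▸ leJ_mul_right (d * e) c)
        obtain ⟨w, hw⟩ := stabL hGB e d hJ1
        have hJ2 : leJ (d * e) ((d * e) * c) := by
          rw [← hfdec]
          exact leJ_trans (leJ_mul_left d e) hef
        obtain ⟨w', hw'⟩ := stabR hGB (d * e) c hJ2
        refine ⟨d * e, ⟨⟨w, hw⟩, ⟨(d : WithOne S), by rw [WithOne.coe_mul]⟩⟩, ?_⟩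
        rw [hfdec]
        exact ⟨⟨w', hw'⟩, ⟨(c : WithOne S), by rw [WithOne.coe_mul]⟩⟩
  exact ⟨z, lrel_trans hu.lrel hez, rrel_trans hzf (rrel_symm hv.rrel)⟩

end AuxSgConj

/-- in a regular group-bound semigroup with finite
`D`-classes, if `a e_a ≡ b e_b` then `a e_a` and `b e_b` lie in the same
`D`-class. -/
theorem dRel_of_charEq {S : Type*} [Semigroup S]
    (hreg : Regular S) (hGB : GroupBound S) (hD : FiniteDClasses S)
    (a b ea eb : S) (hea : IsEIdem a ea) (heb : IsEIdem b eb)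
    (hchar : CharEq (a * ea) (b * eb)) : DRel (a * ea) (b * eb) := by
  have hu : InMaxSubgroup ea (a * ea) := aea_mem_maxSubgroup hea
  have hv : InMaxSubgroup eb (b * eb) := aea_mem_maxSubgroup heb
  have he : ea * ea = ea := (hea.choose_spec).idem
  have hf : eb * eb = eb := (heb.choose_spec).idem
  have hchar2 : CharEq (b * eb) (a * ea) := fun V i1 i2 i3 f => (hchar V i1 i2 i3 f).symm
  have h1 : leJ ea eb := leJ_of_charEq hGB hD he hf hu hv hchar
  have h2 : leJ eb ea := leJ_of_charEq hGB hD hf he hv hu hchar2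
  exact drel_of_leJ_leJ hGB hu hv h1 h2

end SgConjPaper
end
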